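/- Let G be a split graph of order n that arises from the disjoint union of a clique C of order c and an independent set I of order n−c (with n−c ≥ 1) by adding m edges, each joining a vertex of C to a vertex of I. Then Mo(G) ≤ (n + c − 1)·m − 2m²/(n − c). -/

import Mathlib

set_option linter.unusedSectionVars false
set_option maxHeartbeats 1000000

open Finset

/-- `nG G u v` is the number of vertices of `G` whose distance to `u` is strictly
smaller than their distance to `v` (vertices at infinite distance to both `u` and `v`
are counted for neither, since the extended distance `⊤` is not `< ⊤`). -/
noncomputable def nG {V : Type*} [Fintype V] (G : SimpleGraph V) (u v : V) : ℕ :=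
  Set.ncard {w : V | G.edist w u < G.edist w v}

/-- The Mostar index `Mo(G) = ∑_{uv ∈ E(G)} |nG(u,v) - nG(v,u)|` of a finite simple graph. -/
noncomputable def mostar {V : Type*} [Fintype V] (G : SimpleGraph V) : ℤ :=
  ∑ e ∈ (Set.toFinite G.edgeSet).toFinset,
    Sym2.lift ⟨fun u v => |(nG G u v : ℤ) - (nG G v u : ℤ)|, fun _ _ => abs_sub_comm _ _⟩ e

section Aux
variable {V : Type*} [Fintype V] [DecidableEq V] {G : SimpleGraph V} [DecidableRel G.Adj]

lemma MSaux.sum_darts_eq (F : Sym2 V → ℤ) :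
    ∑ d : G.Dart, F d.edge = ∑ u, ∑ v ∈ G.neighborFinset u, F s(u, v) := by
  rw [← Finset.sum_fiberwise_of_maps_to (g := fun d : G.Dart => d.fst) (t := Finset.univ)
    (fun d _ => Finset.mem_univ _) (fun d => F d.edge)]
  refine Finset.sum_congr rfl fun v _ => ?_
  rw [show (Finset.univ.filter fun d : G.Dart => d.fst = v)
      = Finset.univ.image (G.dartOfNeighborSet v) from G.dart_fst_fiber v]
  rw [Finset.sum_image (fun a _ b _ h => G.dartOfNeighborSet_injective v h)]
  rw [show G.neighborFinset v = (G.neighborSet v).toFinset from rfl]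
  rw [← Finset.sum_set_coe (f := fun w => F s(v, w))]
  rfl

lemma MSaux.two_mul_sum_edges (F : Sym2 V → ℤ) :
    2 * ∑ e ∈ G.edgeFinset, F e = ∑ u, ∑ v ∈ G.neighborFinset u, F s(u, v) := by
  rw [← MSaux.sum_darts_eq]
  rw [← Finset.sum_fiberwise_of_maps_to (g := fun d : G.Dart => d.edge) (t := G.edgeFinset)
    (fun d _ => by rw [SimpleGraph.mem_edgeFinset]; exact d.edge_mem) (fun d => F d.edge)]
  rw [Finset.mul_sum]
  refine Finset.sum_congr rfl fun e he => ?_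
  have hcard := G.dart_edge_fiber_card e (SimpleGraph.mem_edgeFinset.mp he)
  rw [Finset.sum_congr rfl (fun d hd => by rw [(Finset.mem_filter.mp hd).2])]
  rw [Finset.sum_const, hcard]
  simp [two_mul]

lemma MSaux.exists_adj_of_reachable {w z : V} (hne : w ≠ z) (h : G.Reachable w z) :
    ∃ x, G.Adj w x := by
  obtain ⟨p⟩ := h
  cases p with
  | nil => exact absurd rfl hne
  | cons h _ => exact ⟨_, h⟩

variable {C : Finset V}
  (hclique : ∀ u ∈ C, ∀ v ∈ C, u ≠ v → G.Adj u v)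
  (hindep : ∀ u ∉ C, ∀ v ∉ C, ¬ G.Adj u v)

include hclique hindep

lemma MSaux.clique_set {u v : V} (hu : u ∈ C) (hv : v ∈ C) (huv : u ≠ v) :
    {w | G.edist w u < G.edist w v}
      = insert u {w : V | w ∉ C ∧ G.Adj w u ∧ ¬ G.Adj w v} := by
  have hadj : G.Adj u v := hclique u hu v hv huv
  ext w
  simp only [Set.mem_setOf_eq, Set.mem_insert_iff]
  constructor
  · intro h
    by_cases hwu : w = u
    · exact Or.inl hwu
    right
    have hne0 : G.edist w u ≠ 0 := by
      simpa [SimpleGraph.edist_eq_zero_iff] using hwu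
    have hwv : ¬ G.Adj w v := by
      intro ha
      rw [SimpleGraph.edist_eq_one_iff_adj.mpr ha] at h
      have h0 : G.edist w u = 0 := ENat.lt_one_iff_eq_zero.mp h
      exact hwu (SimpleGraph.edist_eq_zero_iff.mp h0)
    have hwC : w ∉ C := by
      intro hwC
      rcases eq_or_ne w v with rfl | hne
      · rw [SimpleGraph.edist_self] at h; simp at h
      · exact hwv (hclique w hwC v hv hne)
    refine ⟨hwC, ?_, hwv⟩
    by_contra hnadj
    have hfin : G.edist w u ≠ ⊤ := fun ht => by rw [ht] at h; exact (not_top_lt h)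
    obtain ⟨x, hx⟩ := MSaux.exists_adj_of_reachable hwu
      (SimpleGraph.edist_ne_top_iff_reachable.mp hfin)
    have hxC : x ∈ C := by
      by_contra hxC; exact hindep w hwC x hxC hx
    have hxv : G.edist x v ≤ 1 := by
      rcases eq_or_ne x v with rfl | hne
      · simp [SimpleGraph.edist_self]
      · exact le_of_eq (SimpleGraph.edist_eq_one_iff_adj.mpr (hclique x hxC v hv hne))
    have hwv2 : G.edist w v ≤ 2 := by
      calc G.edist w v ≤ G.edist w x + G.edist x v := SimpleGraph.edist_triangle
        _ ≤ 1 + 1 := add_le_add (le_of_eq (SimpleGraph.edist_eq_one_iff_adj.mpr hx)) hxv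
        _ = 2 := by norm_num
    have hwu2 : 2 ≤ G.edist w u := by
      have h1 : G.edist w u ≠ 1 := fun h1 =>
        hnadj (SimpleGraph.edist_eq_one_iff_adj.mp h1)
      have h1' : 1 ≤ G.edist w u := ENat.one_le_iff_ne_zero.mpr hne0
      exact Order.add_one_le_of_lt (lt_of_le_of_ne h1' (Ne.symm h1))
    exact absurd (lt_of_lt_of_le h hwv2) (not_lt.mpr hwu2)
  · rintro (rfl | ⟨hwC, hau, hav⟩)
    · rw [SimpleGraph.edist_self, SimpleGraph.edist_eq_one_iff_adj.mpr hadj]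
      norm_num
    · rw [SimpleGraph.edist_eq_one_iff_adj.mpr hau]
      have hwv : w ≠ v := fun e => by subst e; exact hwC hv
      have h0 : G.edist w v ≠ 0 := by simpa [SimpleGraph.edist_eq_zero_iff] using hwv
      have h1 : G.edist w v ≠ 1 := fun h1 => hav (SimpleGraph.edist_eq_one_iff_adj.mp h1)
      have h1' : 1 ≤ G.edist w v := ENat.one_le_iff_ne_zero.mpr h0
      exact lt_of_le_of_ne h1' (Ne.symm h1)

lemma MSaux.cross_low {u v : V} (hu : u ∈ C) (hv : v ∉ C) (hadj : G.Adj u v) :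
    {w | G.edist w v < G.edist w u} = {v} := by
  ext w
  simp only [Set.mem_setOf_eq, Set.mem_singleton_iff]
  constructor
  · intro h
    by_contra hwv
    by_cases hwC : w ∈ C
    · rcases eq_or_ne w u with rfl | hne
      · rw [SimpleGraph.edist_self] at h; simp at h
      · rw [SimpleGraph.edist_eq_one_iff_adj.mpr (hclique w hwC u hu hne)] at h
        have h0 : G.edist w v = 0 := ENat.lt_one_iff_eq_zero.mp h
        exact hwv (SimpleGraph.edist_eq_zero_iff.mp h0)
    · have hfin : G.edist w v ≠ ⊤ := fun ht => by rw [ht] at h; exact (not_top_lt h)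
      obtain ⟨x, hx⟩ := MSaux.exists_adj_of_reachable hwv
        (SimpleGraph.edist_ne_top_iff_reachable.mp hfin)
      have hxC : x ∈ C := by
        by_contra hxC; exact hindep w hwC x hxC hx
      have hxu : G.edist x u ≤ 1 := by
        rcases eq_or_ne x u with rfl | hne
        · simp [SimpleGraph.edist_self]
        · exact le_of_eq (SimpleGraph.edist_eq_one_iff_adj.mpr (hclique x hxC u hu hne))
      have hwu2 : G.edist w u ≤ 2 := by
        calc G.edist w u ≤ G.edist w x + G.edist x u := SimpleGraph.edist_triangle
          _ ≤ 1 + 1 := add_le_add (le_of_eq (SimpleGraph.edist_eq_one_iff_adj.mpr hx)) hxu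
          _ = 2 := by norm_num
      have hwv2 : 2 ≤ G.edist w v := by
        have h0 : G.edist w v ≠ 0 := by simpa [SimpleGraph.edist_eq_zero_iff] using hwv
        have h1 : G.edist w v ≠ 1 := fun h1 =>
          (hindep w hwC v hv) (SimpleGraph.edist_eq_one_iff_adj.mp h1)
        have h1' : 1 ≤ G.edist w v := ENat.one_le_iff_ne_zero.mpr h0
        exact Order.add_one_le_of_lt (lt_of_le_of_ne h1' (Ne.symm h1))
      exact absurd (lt_of_lt_of_le h hwu2) (not_lt.mpr hwv2)
  · rintro rfl
    rw [SimpleGraph.edist_self, SimpleGraph.edist_eq_one_iff_adj.mpr hadj.symm]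
    norm_num

lemma MSaux.nG_clique {u v : V} (hu : u ∈ C) (hv : v ∈ C) (huv : u ≠ v) :
    (nG G u v : ℤ) - nG G v u
      = ((G.neighborFinset u \ C).card : ℤ) - (G.neighborFinset v \ C).card := by
  have key : ∀ x y : V, x ∈ C → y ∈ C → x ≠ y →
      (nG G x y : ℤ) = 1 + ((univ.filter fun w => w ∉ C ∧ G.Adj w x ∧ ¬ G.Adj w y).card : ℤ) := by
    intro x y hx hy hxy
    rw [nG, MSaux.clique_set hclique hindep hx hy hxy]
    have hset : {w : V | w ∉ C ∧ G.Adj w x ∧ ¬ G.Adj w y}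
        = ↑(univ.filter fun w => w ∉ C ∧ G.Adj w x ∧ ¬ G.Adj w y) := by
      ext w; simp
    rw [hset, ← Finset.coe_insert, Set.ncard_coe_finset,
      Finset.card_insert_of_notMem (by simp [hx])]
    push_cast; ring
  rw [key u v hu hv huv, key v u hv hu huv.symm]
  have hsd : ∀ x y : V, (univ.filter fun w => w ∉ C ∧ G.Adj w x ∧ ¬ G.Adj w y)
      = (G.neighborFinset x \ C) \ (G.neighborFinset y \ C) := by
    intro x y; ext w
    simp only [Finset.mem_filter, Finset.mem_univ, true_and, Finset.mem_sdiff,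
      SimpleGraph.mem_neighborFinset]
    constructor
    · rintro ⟨h1, h2, h3⟩; exact ⟨⟨h2.symm, h1⟩, fun h => h3 h.1.symm⟩
    · rintro ⟨⟨h2, h1⟩, h3⟩
      exact ⟨h1, h2.symm, fun h => h3 ⟨h.symm, h1⟩⟩
  rw [hsd u v, hsd v u]
  have e1 := Finset.card_sdiff_add_card_inter (G.neighborFinset u \ C) (G.neighborFinset v \ C)
  have e2 := Finset.card_sdiff_add_card_inter (G.neighborFinset v \ C) (G.neighborFinset u \ C)
  rw [Finset.inter_comm] at e2
  omega

lemma MSaux.nG_cross {u v : V} (hu : u ∈ C) (hv : v ∉ C) (hadj : G.Adj u v) :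
    |(nG G u v : ℤ) - nG G v u| ≤ (Fintype.card V : ℤ) - 1 - G.degree v := by
  have hlow : nG G v u = 1 := by
    rw [nG, MSaux.cross_low hclique hindep hu hv hadj]
    simp
  set T : Finset V := insert v (G.neighborFinset v \ {u}) with hT
  have hvN : v ∉ G.neighborFinset v := by simp
  have huN : u ∈ G.neighborFinset v := by simp [SimpleGraph.mem_neighborFinset, hadj.symm]
  have hcardT : T.card = G.degree v := by
    rw [hT, Finset.card_insert_of_notMem (by simp [hvN])]
    rw [Finset.card_sdiff_of_subset (by simpa using huN)]
    have : 1 ≤ G.degree v := by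
      rw [← SimpleGraph.card_neighborFinset_eq_degree]
      exact Finset.card_pos.mpr ⟨u, huN⟩
    simp only [Finset.card_singleton]
    rw [SimpleGraph.card_neighborFinset_eq_degree]
    omega
  have hsub : {w : V | G.edist w u < G.edist w v} ⊆ ↑(Tᶜ) := by
    intro w hw
    simp only [Set.mem_setOf_eq] at hw
    simp only [Finset.coe_compl, Set.mem_compl_iff, Finset.mem_coe, hT, Finset.mem_insert,
      Finset.mem_sdiff, Finset.mem_singleton, SimpleGraph.mem_neighborFinset]
    rintro (rfl | ⟨hwv, hwu⟩)
    · rw [SimpleGraph.edist_self] at hw; simp at hw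
    · have hwC : w ∈ C := by
        by_contra hwC
        exact hindep v hv w hwC hwv
      rw [SimpleGraph.edist_eq_one_iff_adj.mpr (hclique w hwC u hu hwu),
        SimpleGraph.edist_eq_one_iff_adj.mpr hwv.symm] at hw
      exact lt_irrefl _ hw
  have hup : nG G u v ≤ Fintype.card V - G.degree v := by
    have := Set.ncard_le_ncard hsub (Set.toFinite _)
    rw [Set.ncard_coe_finset, Finset.card_compl, hcardT] at this
    exact this
  have hlo : 1 ≤ nG G u v := by
    have hmem : u ∈ {w : V | G.edist w u < G.edist w v} := by
      simp only [Set.mem_setOf_eq, SimpleGraph.edist_self,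
        SimpleGraph.edist_eq_one_iff_adj.mpr hadj]
      norm_num
    rw [nG]
    exact (Set.ncard_pos (Set.toFinite _)).mpr ⟨u, hmem⟩
  have hdle : T.card ≤ Fintype.card V := Finset.card_le_univ T
  rw [hcardT] at hdle
  have hup' : nG G u v + G.degree v ≤ Fintype.card V := by omega
  rw [hlow, abs_sub_le_iff]
  constructor <;> push_cast <;> omega

end Aux

/-- If `G` is a split graph of order `n`, arising from a clique `C` of order `c` and an
independent set `I = Cᶜ` of order `n - c ≥ 1` by adding `m` edges between `C` and `I`,
then `Mo(G) ≤ (n + c - 1)·m - 2m²/(n - c)`. -/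
theorem mostar_split_le {V : Type*} [Fintype V] [DecidableEq V] (G : SimpleGraph V)
    [DecidableRel G.Adj] (n c m : ℕ) (hn : Fintype.card V = n)
    (C : Finset V) (hC : C.card = c)
    (hclique : ∀ u ∈ C, ∀ v ∈ C, u ≠ v → G.Adj u v)
    (hindep : ∀ u ∉ C, ∀ v ∉ C, ¬ G.Adj u v)
    (hm : (G.edgeFinset.filter fun e => ∃ v ∈ e, v ∉ C).card = m)
    (hcn : c < n) :
    (mostar G : ℝ) ≤ ((n : ℝ) + (c : ℝ) - 1) * (m : ℝ) - 2 * (m : ℝ) ^ 2 / ((n : ℝ) - (c : ℝ)) := by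
  subst hn hC hm
  set N : ℕ := Fintype.card V with hN
  set F : Sym2 V → ℤ := Sym2.lift
    ⟨fun u v => |(nG G u v : ℤ) - (nG G v u : ℤ)|, fun _ _ => abs_sub_comm _ _⟩ with hF
  set D : V → ℕ := fun u => (G.neighborFinset u \ C).card with hD
  set md : ℕ := (G.edgeFinset.filter fun e => ∃ v ∈ e, v ∉ C).card with hmd
  -- mostar as edgeFinset sum
  have hmostar : mostar G = ∑ e ∈ G.edgeFinset, F e := by
    rw [mostar]
    apply Finset.sum_congr _ (fun _ _ => rfl)
    ext e; simp [SimpleGraph.mem_edgeFinset]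
  -- neighbor finsets inside C
  have hNC : ∀ u ∈ C, G.neighborFinset u ∩ C = C.erase u := by
    intro u hu
    ext w
    simp only [Finset.mem_inter, SimpleGraph.mem_neighborFinset, Finset.mem_erase]
    constructor
    · rintro ⟨h1, h2⟩; exact ⟨fun e => G.irrefl (by rwa [e] at h1), h2⟩
    · rintro ⟨h1, h2⟩; exact ⟨hclique u hu w h2 (Ne.symm h1), h2⟩
  have hNI : ∀ v ∉ C, C.filter (fun u => G.Adj u v) = G.neighborFinset v := by
    intro v hv
    ext u
    simp only [Finset.mem_filter, SimpleGraph.mem_neighborFinset]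
    constructor
    · rintro ⟨h1, h2⟩; exact h2.symm
    · intro h
      refine ⟨?_, h.symm⟩
      by_contra huC
      exact hindep v hv u huC h
  -- the swap lemma
  have swap : ∀ h : V → ℤ, (∑ u ∈ C, ∑ v ∈ G.neighborFinset u \ C, h v)
      = ∑ v ∈ Cᶜ, (G.degree v : ℤ) * h v := by
    intro h
    have step1 : ∀ u, G.neighborFinset u \ C = Cᶜ.filter (fun v => G.Adj u v) := by
      intro u; ext w
      simp only [Finset.mem_sdiff, SimpleGraph.mem_neighborFinset, Finset.mem_filter,
        Finset.mem_compl]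
      tauto
    calc ∑ u ∈ C, ∑ v ∈ G.neighborFinset u \ C, h v
        = ∑ u ∈ C, ∑ v ∈ Cᶜ, if G.Adj u v then h v else 0 := by
          refine Finset.sum_congr rfl fun u _ => ?_
          rw [step1 u, Finset.sum_filter]
      _ = ∑ v ∈ Cᶜ, ∑ u ∈ C, if G.Adj u v then h v else 0 := Finset.sum_comm
      _ = ∑ v ∈ Cᶜ, (G.degree v : ℤ) * h v := by
          refine Finset.sum_congr rfl fun v hv => ?_
          rw [← Finset.sum_filter, Finset.sum_const,
            hNI v (Finset.mem_compl.mp hv), SimpleGraph.card_neighborFinset_eq_degree,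
            nsmul_eq_mul]
  -- sum of D over C equals sum of degrees over the complement
  have hDsum : (∑ u ∈ C, (D u : ℤ)) = ∑ v ∈ Cᶜ, (G.degree v : ℤ) := by
    have := swap (fun _ => (1 : ℤ))
    simpa [Finset.mul_sum, hD] using this
  -- m = sum of degrees over the independent set
  have hdm : (∑ v ∈ Cᶜ, (G.degree v : ℤ)) = md := by
    have hsplit := MSaux.two_mul_sum_edges (G := G)
      (fun e => if (∃ v ∈ e, v ∉ C) then (1 : ℤ) else 0)
    have hlhs : (∑ e ∈ G.edgeFinset, if (∃ v ∈ e, v ∉ C) then (1 : ℤ) else 0) = md := by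
      rw [Finset.sum_boole, hmd]
    have hind : ∀ u v : V, (if (∃ x ∈ (s(u, v) : Sym2 V), x ∉ C) then (1 : ℤ) else 0)
        = if u ∉ C ∨ v ∉ C then 1 else 0 := by
      intro u v
      congr 1
      simp only [eq_iff_iff, Sym2.mem_iff]
      constructor
      · rintro ⟨x, (rfl | rfl), hx⟩
        · exact Or.inl hx
        · exact Or.inr hx
      · rintro (h | h)
        · exact ⟨u, Or.inl rfl, h⟩
        · exact ⟨v, Or.inr rfl, h⟩
    rw [hlhs] at hsplit
    rw [← Finset.sum_add_sum_compl C (fun u => ∑ v ∈ G.neighborFinset u,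
      if (∃ x ∈ (s(u, v) : Sym2 V), x ∉ C) then (1 : ℤ) else 0)] at hsplit
    have hc1 : ∀ u ∈ C, (∑ v ∈ G.neighborFinset u,
        if (∃ x ∈ (s(u, v) : Sym2 V), x ∉ C) then (1 : ℤ) else 0) = (D u : ℤ) := by
      intro u hu
      rw [Finset.sum_congr rfl (fun v _ => hind u v)]
      rw [Finset.sum_congr rfl (fun v _ => show
        ((if u ∉ C ∨ v ∉ C then (1:ℤ) else 0) = if v ∉ C then 1 else 0) by simp [hu])]
      rw [Finset.sum_boole]
      simp only [hD]
      congr 2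
      rw [Finset.sdiff_eq_filter]
    have hc2 : ∀ u ∈ Cᶜ, (∑ v ∈ G.neighborFinset u,
        if (∃ x ∈ (s(u, v) : Sym2 V), x ∉ C) then (1 : ℤ) else 0) = (G.degree u : ℤ) := by
      intro u hu
      rw [Finset.sum_congr rfl (fun v _ => hind u v)]
      rw [Finset.sum_congr rfl (fun v _ => show
        ((if u ∉ C ∨ v ∉ C then (1:ℤ) else 0) = 1) by
          simp [Finset.mem_compl.mp hu])]
      rw [Finset.sum_const, SimpleGraph.card_neighborFinset_eq_degree]
      simp
    rw [Finset.sum_congr rfl hc1, Finset.sum_congr rfl hc2, hDsum] at hsplit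
    omega
  -- decomposition of 2 * mostar
  have hdecomp : 2 * mostar G = (∑ u ∈ C, ∑ v ∈ C.erase u, F s(u, v))
      + ((∑ u ∈ C, ∑ v ∈ G.neighborFinset u \ C, F s(u, v))
        + ∑ u ∈ Cᶜ, ∑ v ∈ G.neighborFinset u, F s(u, v)) := by
    rw [hmostar, MSaux.two_mul_sum_edges]
    rw [← Finset.sum_add_sum_compl C (fun u => ∑ v ∈ G.neighborFinset u, F s(u, v))]
    have hsplitC : ∀ u ∈ C, ∑ v ∈ G.neighborFinset u, F s(u, v)
        = ∑ v ∈ C.erase u, F s(u, v) + ∑ v ∈ G.neighborFinset u \ C, F s(u, v) := by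
      intro u hu
      rw [← Finset.sum_inter_add_sum_sdiff (G.neighborFinset u) C, hNC u hu]
    rw [Finset.sum_congr rfl hsplitC, Finset.sum_add_distrib]
    ring
  -- term values and bounds
  have hT1 : (∑ u ∈ C, ∑ v ∈ C.erase u, F s(u, v))
      = ∑ u ∈ C, ∑ v ∈ C.erase u, |(D u : ℤ) - D v| := by
    refine Finset.sum_congr rfl fun u hu => Finset.sum_congr rfl fun v hv => ?_
    obtain ⟨hvu, hvC⟩ := Finset.mem_erase.mp hv
    simp only [hF, Sym2.lift_mk]
    rw [MSaux.nG_clique hclique hindep hu hvC (Ne.symm hvu)]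
  have hT2 : (∑ u ∈ C, ∑ v ∈ G.neighborFinset u \ C, F s(u, v))
      ≤ ∑ v ∈ Cᶜ, (G.degree v : ℤ) * ((N : ℤ) - 1 - G.degree v) := by
    rw [← swap (fun v => (N : ℤ) - 1 - G.degree v)]
    refine Finset.sum_le_sum fun u hu => Finset.sum_le_sum fun v hv => ?_
    obtain ⟨hvN, hvC⟩ := Finset.mem_sdiff.mp hv
    have hadj : G.Adj u v := (SimpleGraph.mem_neighborFinset _ _ _).mp hvN
    simp only [hF, Sym2.lift_mk]
    exact MSaux.nG_cross hclique hindep hu hvC hadj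
  have hT3 : (∑ u ∈ Cᶜ, ∑ v ∈ G.neighborFinset u, F s(u, v))
      ≤ ∑ u ∈ Cᶜ, (G.degree u : ℤ) * ((N : ℤ) - 1 - G.degree u) := by
    refine Finset.sum_le_sum fun u hu => ?_
    have huC : u ∉ C := Finset.mem_compl.mp hu
    have hbd : ∀ v ∈ G.neighborFinset u, F s(u, v) ≤ (N : ℤ) - 1 - G.degree u := by
      intro v hv
      have hadj : G.Adj u v := (SimpleGraph.mem_neighborFinset _ _ _).mp hv
      have hvC : v ∈ C := by
        by_contra hvC
        exact hindep u huC v hvC hadj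
      simp only [hF, Sym2.lift_mk]
      rw [abs_sub_comm]
      exact MSaux.nG_cross hclique hindep hvC huC hadj.symm
    calc ∑ v ∈ G.neighborFinset u, F s(u, v)
        ≤ ∑ _v ∈ G.neighborFinset u, ((N : ℤ) - 1 - G.degree u) := Finset.sum_le_sum hbd
      _ = (G.degree u : ℤ) * ((N : ℤ) - 1 - G.degree u) := by
          rw [Finset.sum_const, SimpleGraph.card_neighborFinset_eq_degree, nsmul_eq_mul]
  have hmain : 2 * mostar G ≤ (∑ u ∈ C, ∑ v ∈ C.erase u, |(D u : ℤ) - D v|)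
      + 2 * ∑ v ∈ Cᶜ, (G.degree v : ℤ) * ((N : ℤ) - 1 - G.degree v) := by
    rw [hdecomp, hT1]
    have := add_le_add hT2 hT3
    omega
  -- move to the reals
  have hmainR : 2 * (mostar G : ℝ) ≤ (∑ u ∈ C, ∑ v ∈ C.erase u,
        |((D u : ℕ) : ℝ) - ((D v : ℕ) : ℝ)|)
      + 2 * ∑ v ∈ Cᶜ, ((G.degree v : ℕ) : ℝ) * ((N : ℝ) - 1 - ((G.degree v : ℕ) : ℝ)) := by
    exact_mod_cast hmain
  set sR : ℝ := ((Cᶜ.card : ℕ) : ℝ) with hsR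
  have hcleN : C.card ≤ N := Finset.card_le_univ C
  have hs : sR = (N : ℝ) - C.card := by
    rw [hsR, Finset.card_compl]
    push_cast [Nat.cast_sub hcleN]
    exact Nat.cast_sub hcleN
  have hspos : 0 < sR := by
    rw [hs]
    have : (C.card : ℝ) < (N : ℝ) := by exact_mod_cast hcn
    linarith
  have hDle : ∀ u : V, (D u : ℝ) ≤ sR := by
    intro u
    rw [hsR]
    have : D u ≤ Cᶜ.card := by
      apply Finset.card_le_card
      intro w hw
      exact Finset.mem_compl.mpr (Finset.mem_sdiff.mp hw).2
    exact_mod_cast this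
  set MD : ℝ := ∑ u ∈ C, ((D u : ℕ) : ℝ) with hMDdef
  -- MD = md
  have hMDm : MD = (md : ℝ) := by
    have h1 : ((∑ u ∈ C, (D u : ℤ) : ℤ) : ℝ) = ((md : ℤ) : ℝ) := by
      rw [hDsum, hdm]
    push_cast at h1
    exact h1
  have habs : ∀ x y : ℝ, 0 ≤ x → 0 ≤ y → x ≤ sR → y ≤ sR →
      |x - y| ≤ x + y - 2 * x * y / sR := by
    intro x y hx hy hxs hys
    rw [abs_sub_le_iff]
    constructor
    · have h1 : 2 * x * y / sR ≤ 2 * y := by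
        rw [div_le_iff₀ hspos]; nlinarith
      linarith
    · have h1 : 2 * x * y / sR ≤ 2 * x := by
        rw [div_le_iff₀ hspos]; nlinarith
      linarith
  -- clique part bound
  have hclq : (∑ u ∈ C, ∑ v ∈ C.erase u, |((D u : ℕ) : ℝ) - ((D v : ℕ) : ℝ)|)
      ≤ 2 * (C.card : ℝ) * (md : ℝ) - 2 * (md : ℝ) ^ 2 / sR := by
    have step1 : (∑ u ∈ C, ∑ v ∈ C.erase u, |((D u : ℕ) : ℝ) - ((D v : ℕ) : ℝ)|)
        ≤ ∑ u ∈ C, ((C.card : ℝ) * (D u : ℕ) + MD - (2 * MD / sR) * (D u : ℕ)) := by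
      refine Finset.sum_le_sum fun u hu => ?_
      have step2 : (∑ v ∈ C.erase u, |((D u : ℕ) : ℝ) - ((D v : ℕ) : ℝ)|)
          ≤ ∑ v ∈ C.erase u,
            (((D u : ℕ) : ℝ) + (D v : ℕ) - 2 * (D u : ℕ) * (D v : ℕ) / sR) := by
        refine Finset.sum_le_sum fun v _ => ?_
        exact habs _ _ (Nat.cast_nonneg _) (Nat.cast_nonneg _) (hDle u) (hDle v)
      refine step2.trans ?_
      rw [Finset.sum_erase_eq_sub hu]
      have hsC : (∑ v ∈ C, (((D u : ℕ) : ℝ) + (D v : ℕ) - 2 * (D u : ℕ) * (D v : ℕ) / sR))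
          = (C.card : ℝ) * (D u : ℕ) + MD - (2 * ((D u : ℕ) : ℝ) / sR) * MD := by
        rw [Finset.sum_sub_distrib, Finset.sum_add_distrib, Finset.sum_const, nsmul_eq_mul]
        have h3 : (∑ v ∈ C, 2 * ((D u : ℕ) : ℝ) * (D v : ℕ) / sR)
            = (2 * ((D u : ℕ) : ℝ) / sR) * MD := by
          rw [hMDdef, Finset.mul_sum]
          exact Finset.sum_congr rfl fun v _ => by ring
        rw [h3, hMDdef]
      rw [hsC]
      have hDusq : 2 * ((D u : ℕ) : ℝ) * (D u : ℕ) / sR ≤ 2 * (D u : ℕ) := by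
        rw [div_le_iff₀ hspos]
        have := hDle u
        nlinarith [Nat.cast_nonneg (α := ℝ) (D u)]
      have hMDnn : 0 ≤ MD := by
        rw [hMDdef]
        exact Finset.sum_nonneg fun v _ => Nat.cast_nonneg _
      have expand : (((D u : ℕ) : ℝ) + (D u : ℕ) - 2 * (D u : ℕ) * (D u : ℕ) / sR)
          = 2 * ((D u : ℕ) : ℝ) - 2 * ((D u : ℕ) : ℝ) * (D u : ℕ) / sR := by ring
      rw [expand]
      have hcomm : 2 * ((D u : ℕ) : ℝ) / sR * MD = 2 * MD / sR * ((D u : ℕ) : ℝ) := by ring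
      rw [hcomm]
      linarith
    refine step1.trans ?_
    have hfinal : (∑ u ∈ C, ((C.card : ℝ) * (D u : ℕ) + MD - (2 * MD / sR) * (D u : ℕ)))
        = (C.card : ℝ) * MD + (C.card : ℝ) * MD - (2 * MD / sR) * MD := by
      rw [Finset.sum_sub_distrib, Finset.sum_add_distrib, ← Finset.mul_sum, ← Finset.mul_sum,
        Finset.sum_const, nsmul_eq_mul, ← hMDdef]
    rw [hfinal, hMDm]
    have : (2 * (md : ℝ) / sR) * (md : ℝ) = 2 * (md : ℝ) ^ 2 / sR := by ring
    rw [this]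
    linarith
  -- cross part bound
  have hmdR : (∑ v ∈ Cᶜ, ((G.degree v : ℕ) : ℝ)) = (md : ℝ) := by
    have h1 : ((∑ v ∈ Cᶜ, (G.degree v : ℤ) : ℤ) : ℝ) = ((md : ℤ) : ℝ) := by rw [hdm]
    push_cast at h1
    exact h1
  have hcross : (∑ v ∈ Cᶜ, ((G.degree v : ℕ) : ℝ) * ((N : ℝ) - 1 - (G.degree v : ℕ)))
      ≤ ((N : ℝ) - 1) * (md : ℝ) - (md : ℝ) ^ 2 / sR := by
    have hCS := sq_sum_le_card_mul_sum_sq (s := Cᶜ)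
      (f := fun v => ((G.degree v : ℕ) : ℝ))
    rw [hmdR] at hCS
    have hexp : (∑ v ∈ Cᶜ, ((G.degree v : ℕ) : ℝ) * ((N : ℝ) - 1 - (G.degree v : ℕ)))
        = ((N : ℝ) - 1) * (md : ℝ) - ∑ v ∈ Cᶜ, ((G.degree v : ℕ) : ℝ) ^ 2 := by
      rw [← hmdR, Finset.mul_sum, ← Finset.sum_sub_distrib]
      exact Finset.sum_congr rfl fun v _ => by ring
    rw [hexp]
    have hdiv : (md : ℝ) ^ 2 / sR ≤ ∑ v ∈ Cᶜ, ((G.degree v : ℕ) : ℝ) ^ 2 := by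
      rw [div_le_iff₀ hspos]
      calc (md : ℝ) ^ 2 ≤ (Cᶜ.card : ℝ) * ∑ v ∈ Cᶜ, ((G.degree v : ℕ) : ℝ) ^ 2 := hCS
        _ = (∑ v ∈ Cᶜ, ((G.degree v : ℕ) : ℝ) ^ 2) * sR := by rw [hsR]; ring
    linarith
  -- conclude
  have hgoal : (↑N - (C.card : ℝ)) = sR := hs.symm
  rw [hgoal]
  have hformclq : 2 * (md : ℝ) ^ 2 / sR = 2 * ((md : ℝ) ^ 2 / sR) := by ring
  rw [hformclq] at hclq ⊢
  linarith [hmainR, hclq, hcross]
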